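/- arXiv:2309.06700 — 4 statements merged into one kernel-verified Lean document; each statement's English description precedes it below -/
import Mathlib

section
/- Let G be a Young function satisfying Δ₂ and ∇₂. Then for every ε ∈ (0,1) there exists C > 0 such that for all s ≥ 0 and t > 0: s·(G(t)/t) ≤ ε·G(s) + C·G(t). -/
open Real Filter Set

/-- `G` is a Young function: nondecreasing and convex on `[0,∞)`, `G 0 = 0`,
`G(t) → ∞`, `G(t)/t → 0` as `t → 0⁺`, and `G(t)/t → ∞` as `t → ∞`. -/
def IsYoung (G : ℝ → ℝ) : Prop :=
  MonotoneOn G (Set.Ici 0) ∧ ConvexOn ℝ (Set.Ici 0) G ∧ G 0 = 0 ∧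
    Tendsto G atTop atTop ∧
    Tendsto (fun t => G t / t) (nhdsWithin 0 (Set.Ioi 0)) (nhds 0) ∧
    Tendsto (fun t => G t / t) atTop atTop

/-- The complementary Young function `G*(t) = sup {t·s − G(s) : s ≥ 0}`. -/
noncomputable def youngConj (G : ℝ → ℝ) (t : ℝ) : ℝ :=
  sSup ((fun s => t * s - G s) '' Set.Ici 0)

/-- The Δ₂ condition. -/
def Delta2 (G : ℝ → ℝ) : Prop :=
  ∃ τ : ℝ, 1 < τ ∧ ∀ t : ℝ, 0 ≤ t → G (2 * t) ≤ τ * G t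

/-- The ∇₂ condition. -/
def Nabla2 (G : ℝ → ℝ) : Prop :=
  ∃ τ : ℝ, 1 < τ ∧ ∀ t : ℝ, 0 ≤ t → G t ≤ (1 / (2 * τ)) * G (τ * t)

theorem modular_young_inequality (G : ℝ → ℝ) (hG : IsYoung G) (hΔ : Delta2 G) (hN : Nabla2 G) :
    ∀ ε : ℝ, ε ∈ Set.Ioo (0:ℝ) 1 → ∃ C : ℝ, 0 < C ∧
      ∀ s t : ℝ, 0 ≤ s → 0 < t → s * (G t / t) ≤ ε * G s + C * G t := by
  obtain ⟨τ, hτ1, hτ⟩ := hN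
  rintro ε ⟨hε0, hε1⟩
  obtain ⟨n, hn⟩ := exists_pow_lt_of_lt_one hε0 (by norm_num : (1:ℝ)/2 < 1)
  have hτ0 : (0:ℝ) < τ := lt_trans one_pos hτ1
  have hτn : (0:ℝ) < τ ^ n := pow_pos hτ0 n
  refine ⟨τ ^ n, hτn, ?_⟩
  have hGnn : ∀ x : ℝ, 0 ≤ x → 0 ≤ G x := by
    intro x hx
    have := hG.1 (Set.mem_Ici.2 le_rfl) (Set.mem_Ici.2 hx) hx
    rw [hG.2.2.1] at this
    exact this
  have hslope : ∀ a b : ℝ, 0 < a → a ≤ b → G a / a ≤ G b / b := by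
    intro a b ha hab
    have hb : 0 < b := lt_of_lt_of_le ha hab
    have hθ0 : 0 ≤ a / b := by positivity
    have hθ1 : a / b ≤ 1 := (div_le_one hb).2 hab
    have hconv := hG.2.1.2 (Set.mem_Ici.2 (le_refl (0:ℝ))) (Set.mem_Ici.2 hb.le)
      (by linarith : (0:ℝ) ≤ 1 - a / b) hθ0 (by ring)
    have heq : (1 - a / b) • (0:ℝ) + (a / b) • b = a := by
      field_simp
      simp [hb.ne']
    rw [heq, hG.2.2.1] at hconv
    have : G a ≤ (a / b) * G b := by
      simpa using hconv
    rw [div_le_div_iff₀ ha hb]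
    calc G a * b ≤ (a / b * G b) * b := by nlinarith
      _ = G b * a := by field_simp
  have hiter : ∀ m : ℕ, ∀ x : ℝ, 0 ≤ x → G x ≤ (1 / (2 * τ)) ^ m * G (τ ^ m * x) := by
    intro m
    induction m with
    | zero => intro x hx; simp
    | succ m ih =>
      intro x hx
      have h1 : G x ≤ (1 / (2 * τ)) * G (τ * x) := hτ x hx
      have h2 : G (τ * x) ≤ (1 / (2 * τ)) ^ m * G (τ ^ m * (τ * x)) :=
        ih (τ * x) (by positivity)
      calc G x ≤ (1 / (2 * τ)) * G (τ * x) := h1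
        _ ≤ (1 / (2 * τ)) * ((1 / (2 * τ)) ^ m * G (τ ^ m * (τ * x))) := by
            apply mul_le_mul_of_nonneg_left h2 (by positivity)
        _ = (1 / (2 * τ)) ^ (m + 1) * G (τ ^ (m + 1) * x) := by
            rw [pow_succ, pow_succ]; ring_nf
  intro s t hs ht
  have hGt : 0 ≤ G t := hGnn t ht.le
  have hGs : 0 ≤ G s := hGnn s hs
  by_cases hcase : s ≤ τ ^ n * t
  · have h1 : 0 ≤ G t / t := div_nonneg hGt ht.le
    calc s * (G t / t) ≤ (τ ^ n * t) * (G t / t) := mul_le_mul_of_nonneg_right hcase h1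
      _ = τ ^ n * G t := by field_simp
      _ ≤ ε * G s + τ ^ n * G t := le_add_of_nonneg_left (mul_nonneg hε0.le hGs)
  · push_neg at hcase
    have hs0 : 0 < s := lt_trans (by positivity) hcase
    have hst : t ≤ s / τ ^ n := by
      rw [le_div_iff₀ hτn]
      nlinarith
    have hsl := hslope t (s / τ ^ n) ht hst
    have key : s * (G t / t) ≤ τ ^ n * G (s / τ ^ n) := by
      calc s * (G t / t) ≤ s * (G (s / τ ^ n) / (s / τ ^ n)) :=
            mul_le_mul_of_nonneg_left hsl hs
        _ = τ ^ n * G (s / τ ^ n) := by field_simp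
    have hi := hiter n (s / τ ^ n) (by positivity)
    rw [show τ ^ n * (s / τ ^ n) = s by field_simp] at hi
    have h3 : τ ^ n * G (s / τ ^ n) ≤ τ ^ n * ((1 / (2 * τ)) ^ n * G s) :=
      mul_le_mul_of_nonneg_left hi hτn.le
    have heq : τ ^ n * ((1 / (2 * τ)) ^ n * G s) = (1 / 2) ^ n * G s := by
      field_simp [mul_pow]
      rw [← mul_pow, show τ * (1 / (2 * τ)) = 1 / 2 by field_simp]; ring
    have h4 : (1 / 2 : ℝ) ^ n * G s ≤ ε * G s :=
      mul_le_mul_of_nonneg_right hn.le hGs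
    calc s * (G t / t) ≤ (1 / 2) ^ n * G s := by rw [← heq]; linarith
      _ ≤ ε * G s := h4
      _ ≤ ε * G s + τ ^ n * G t := le_add_of_nonneg_right (mul_nonneg hτn.le hGt)
end

section
/- Let Ω ⊂ ℝⁿ be a bounded measurable set with positive measure, p ≥ 1, α > 0, and let f ∈ L^p log^α L(Ω) with ‖f‖_p > 0. Then ‖f‖_{L^p log^α L(Ω)} ≤ [f]_{L^p log^α L(Ω)} ≤ (2^α + (2α/(e·p))^α) · ‖f‖_{L^p log^α L(Ω)}, where the mean integral ⨍ denotes integral divided by |Ω|. -/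
open Real MeasureTheory

variable {n : ℕ}

lemma aux_two_rpow {a b α : ℝ} (ha : 0 ≤ a) (hb : 0 ≤ b) (hα : 0 ≤ α) :
    (a + b) ^ α ≤ 2 ^ α * (a ^ α + b ^ α) := by
  rcases le_total a b with h | h
  · calc (a + b) ^ α ≤ (2 * b) ^ α :=
          Real.rpow_le_rpow (by linarith) (by linarith) hα
    _ = 2 ^ α * b ^ α := Real.mul_rpow (by norm_num) hb
    _ ≤ 2 ^ α * (a ^ α + b ^ α) := by
          have h1 := Real.rpow_nonneg ha α
          have h2 : (0:ℝ) ≤ 2 ^ α := Real.rpow_nonneg (by norm_num) α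
          nlinarith
  · calc (a + b) ^ α ≤ (2 * a) ^ α :=
          Real.rpow_le_rpow (by linarith) (by linarith) hα
    _ = 2 ^ α * a ^ α := Real.mul_rpow (by norm_num) ha
    _ ≤ 2 ^ α * (a ^ α + b ^ α) := by
          have h1 := Real.rpow_nonneg hb α
          have h2 : (0:ℝ) ≤ 2 ^ α := Real.rpow_nonneg (by norm_num) α
          nlinarith

lemma aux_calc {p α t : ℝ} (hp : 0 < p) (hα : 0 < α) (ht : 0 < t) (ht1 : t ≤ 1) :
    t ^ p * (Real.log t⁻¹) ^ α ≤ (α / (Real.exp 1 * p)) ^ α := by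
  set s : ℝ := Real.log t⁻¹ with hs
  have hs0 : 0 ≤ s := Real.log_nonneg ((one_le_inv₀ ht).mpr ht1)
  have htp : t ^ p = Real.exp (-(p * s)) := by
    rw [Real.rpow_def_of_pos ht, hs, Real.log_inv]; ring_nf
  rcases eq_or_lt_of_le hs0 with h0 | h0
  · rw [← h0, Real.zero_rpow (ne_of_gt hα), mul_zero]
    exact Real.rpow_nonneg (by positivity) α
  · set u : ℝ := p * s / α with hu
    have hu0 : 0 < u := by positivity
    have h1 : u ≤ Real.exp (u - 1) := by
      have := Real.add_one_le_exp (u - 1); linarith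
    have h2 : u ^ α ≤ Real.exp (α * u - α) := by
      calc u ^ α ≤ (Real.exp (u - 1)) ^ α :=
            Real.rpow_le_rpow (le_of_lt hu0) h1 (le_of_lt hα)
      _ = Real.exp (α * u - α) := by
            rw [← Real.exp_one_rpow (u-1), ← Real.rpow_mul (le_of_lt (Real.exp_pos 1)),
              Real.exp_one_rpow]
            ring_nf
    have hsu : s = α * u / p := by
      rw [hu, mul_div_assoc', mul_div_cancel_left₀ _ (ne_of_gt hα), mul_div_cancel_left₀ _ (ne_of_gt hp)]
    have h3 : s ^ α = (α / p) ^ α * u ^ α := by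
      rw [hsu, show α * u / p = (α / p) * u by ring, Real.mul_rpow (by positivity) (le_of_lt hu0)]
    have h4 : α * u = p * s := by rw [hu, mul_comm]; exact div_mul_cancel₀ _ (ne_of_gt hα)
    have hrhs : (α / (Real.exp 1 * p)) ^ α = (α / p) ^ α * Real.exp (-α) := by
      rw [show α / (Real.exp 1 * p) = (α / p) * (Real.exp 1)⁻¹ by
          rw [mul_comm (Real.exp 1) p, ← div_div, div_eq_mul_inv],
        Real.mul_rpow (by positivity) (by positivity),
        Real.inv_rpow (le_of_lt (Real.exp_pos 1)), Real.exp_one_rpow, ← Real.exp_neg]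
    have hep : (0:ℝ) < (α/p)^α := by positivity
    have key : u ^ α * Real.exp (-(p*s)) ≤ Real.exp (-α) := by
      calc u ^ α * Real.exp (-(p*s)) ≤ Real.exp (α*u-α) * Real.exp (-(p*s)) :=
            mul_le_mul_of_nonneg_right h2 (le_of_lt (Real.exp_pos _))
      _ = Real.exp (-α) := by rw [← Real.exp_add]; congr 1; linarith
    rw [htp, h3, hrhs]
    calc Real.exp (-(p*s)) * ((α/p)^α * u^α) = (α/p)^α * (u^α * Real.exp (-(p*s))) := by ring
    _ ≤ (α/p)^α * Real.exp (-α) := mul_le_mul_of_nonneg_left key (le_of_lt hep)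

lemma aux_one_le_log {t : ℝ} (ht : 0 ≤ t) : 1 ≤ Real.log (Real.exp 1 + t) := by
  calc (1:ℝ) = Real.log (Real.exp 1) := (Real.log_exp 1).symm
  _ ≤ Real.log (Real.exp 1 + t) := Real.log_le_log (Real.exp_pos 1) (by linarith)

lemma aux_log_shift {c σ t : ℝ} (hc : 0 < c) (hcσ : c ≤ σ) (ht : 0 ≤ t) :
    Real.log (Real.exp 1 + t / c) ≤ Real.log (σ / c) + Real.log (Real.exp 1 + t / σ) := by
  have hσ : 0 < σ := lt_of_lt_of_le hc hcσ
  have he := Real.exp_pos 1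
  rw [← Real.log_mul (by positivity) (by positivity)]
  apply Real.log_le_log (by positivity)
  have heq : σ / c * (Real.exp 1 + t / σ) = (σ / c) * Real.exp 1 + t / c := by
    field_simp
  rw [heq]
  have h1 : Real.exp 1 ≤ (σ / c) * Real.exp 1 :=
    le_mul_of_one_le_left (le_of_lt he) ((one_le_div hc).mpr hcσ)
  linarith

lemma aux_log_c {c t : ℝ} (hc : 0 < c) (ht : 0 ≤ t) :
    Real.log (Real.exp 1 + t / c) ≤ (1 + |Real.log c|) * Real.log (Real.exp 1 + t) := by
  have hL := aux_one_le_log ht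
  have he := Real.exp_pos 1
  have h1 : Real.log (Real.exp 1 + t / c) ≤ Real.log (Real.exp 1 + t) + |Real.log c| := by
    rcases le_total 1 c with h | h
    · have h2 : t / c ≤ t := div_le_self ht h
      have h3 := Real.log_le_log (show (0:ℝ) < Real.exp 1 + t / c by positivity)
        (show Real.exp 1 + t / c ≤ Real.exp 1 + t by linarith)
      have := abs_nonneg (Real.log c)
      linarith
    · have h2 : Real.exp 1 + t / c ≤ (Real.exp 1 + t) / c := by
        rw [add_div]
        have : Real.exp 1 ≤ Real.exp 1 / c := le_div_self (le_of_lt he) hc h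
        linarith
      calc Real.log (Real.exp 1 + t / c) ≤ Real.log ((Real.exp 1 + t) / c) :=
            Real.log_le_log (by positivity) h2
      _ = Real.log (Real.exp 1 + t) - Real.log c :=
            Real.log_div (by positivity) (ne_of_gt hc)
      _ ≤ Real.log (Real.exp 1 + t) + |Real.log c| := by
            have := neg_abs_le (Real.log c); linarith
  calc Real.log (Real.exp 1 + t / c) ≤ Real.log (Real.exp 1 + t) + |Real.log c| := h1
  _ ≤ Real.log (Real.exp 1 + t) + |Real.log c| * Real.log (Real.exp 1 + t) := by
        nlinarith [abs_nonneg (Real.log c)]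
  _ = (1 + |Real.log c|) * Real.log (Real.exp 1 + t) := by ring

lemma aux_meas_G {X : Type*} [MeasurableSpace X] {f : X → ℝ} (hf : Measurable f) (p α c : ℝ) :
    Measurable fun x => |f x| ^ p * (Real.log (Real.exp 1 + |f x| / c)) ^ α := by
  measurability

lemma aux_meas_p {X : Type*} [MeasurableSpace X] {f : X → ℝ} (hf : Measurable f) (p : ℝ) :
    Measurable fun x => |f x| ^ p := by
  measurability

/-- The mean `L^p` norm `‖f‖_p = (⨍_Ω |f|^p)^{1/p}` (with mean integral). -/
noncomputable def meanLpNorm (Ω : Set (EuclideanSpace ℝ (Fin n))) (p : ℝ)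
    (f : EuclideanSpace ℝ (Fin n) → ℝ) : ℝ :=
  (⨍ x in Ω, |f x| ^ p) ^ (1 / p)

/-- The Luxemburg norm of the Orlicz–Zygmund space `L^p log^α L(Ω)` (mean-integral form). -/
noncomputable def luxNorm (Ω : Set (EuclideanSpace ℝ (Fin n))) (p α : ℝ)
    (f : EuclideanSpace ℝ (Fin n) → ℝ) : ℝ :=
  sInf {σ : ℝ | 0 < σ ∧
    ⨍ x in Ω, (|f x| ^ p / σ ^ p) * (Real.log (Real.exp 1 + |f x| / σ)) ^ α ≤ 1}

/-- The modular `[f]_{L^p log^α L(Ω)}`. -/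
noncomputable def modularNorm (Ω : Set (EuclideanSpace ℝ (Fin n))) (p α : ℝ)
    (f : EuclideanSpace ℝ (Fin n) → ℝ) : ℝ :=
  (⨍ x in Ω, |f x| ^ p *
    (Real.log (Real.exp 1 + |f x| / meanLpNorm Ω p f)) ^ α) ^ (1 / p)

theorem luxNorm_le_modular_le (Ω : Set (EuclideanSpace ℝ (Fin n)))
    (hΩm : MeasurableSet Ω) (hΩfin : volume Ω < ⊤) (hΩpos : 0 < volume Ω)
    (p α : ℝ) (hp : 1 ≤ p) (hα : 0 < α)
    (f : EuclideanSpace ℝ (Fin n) → ℝ) (hf : Measurable f)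
    (hmem : Integrable (fun x => |f x| ^ p * (Real.log (Real.exp 1 + |f x|)) ^ α)
      (volume.restrict Ω))
    (hpos : 0 < meanLpNorm Ω p f) :
    luxNorm Ω p α f ≤ modularNorm Ω p α f ∧
      modularNorm Ω p α f ≤
        (2 ^ α + (2 * α / (Real.exp 1 * p)) ^ α) * luxNorm Ω p α f := by
  have hp0 : 0 < p := lt_of_lt_of_le one_pos hp
  set V : ℝ := (volume Ω).toReal with hVdef
  have hV : 0 < V := ENNReal.toReal_pos (ne_of_gt hΩpos) (ne_of_lt hΩfin)
  have hVinv : 0 < V⁻¹ := inv_pos.mpr hV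
  set M : ℝ := meanLpNorm Ω p f with hMdef
  set G : ℝ → (EuclideanSpace ℝ (Fin n)) → ℝ :=
    fun c x => |f x| ^ p * (Real.log (Real.exp 1 + |f x| / c)) ^ α with hGdef
  set I : ℝ → ℝ := fun c => ∫ x in Ω, G c x with hIdef
  set Np : ℝ := ∫ x in Ω, |f x| ^ p with hNpdef
  -- basic pointwise facts
  have hlog1 : ∀ (c : ℝ), 0 < c → ∀ (x : EuclideanSpace ℝ (Fin n)),
      1 ≤ Real.log (Real.exp 1 + |f x| / c) := by
    intro c hc x
    exact aux_one_le_log (by positivity)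
  have hGnn : ∀ (c : ℝ), 0 < c → ∀ (x : EuclideanSpace ℝ (Fin n)), 0 ≤ G c x := by
    intro c hc x
    exact mul_nonneg (Real.rpow_nonneg (abs_nonneg _) p)
      (Real.rpow_nonneg (le_trans zero_le_one (hlog1 c hc x)) α)
  -- measurability and integrability
  have hGmeas : ∀ c : ℝ, AEStronglyMeasurable (G c) (volume.restrict Ω) :=
    fun c => (aux_meas_G hf p α c).aestronglyMeasurable
  have hInt1 : Integrable (fun x => |f x| ^ p) (volume.restrict Ω) := by
    apply hmem.mono' (aux_meas_p hf p).aestronglyMeasurable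
    filter_upwards with x
    rw [Real.norm_eq_abs, abs_of_nonneg (Real.rpow_nonneg (abs_nonneg _) p)]
    exact le_mul_of_one_le_right (Real.rpow_nonneg (abs_nonneg _) p)
      (Real.one_le_rpow (aux_one_le_log (abs_nonneg _)) (le_of_lt hα))
  have hIntc : ∀ c : ℝ, 0 < c → Integrable (G c) (volume.restrict Ω) := by
    intro c hc
    apply Integrable.mono' (hmem.const_mul ((1 + |Real.log c|) ^ α)) (hGmeas c)
    filter_upwards with x
    rw [Real.norm_eq_abs, abs_of_nonneg (hGnn c hc x)]
    have h1 : Real.log (Real.exp 1 + |f x| / c) ≤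
        (1 + |Real.log c|) * Real.log (Real.exp 1 + |f x|) := aux_log_c hc (abs_nonneg _)
    have h2 : (Real.log (Real.exp 1 + |f x| / c)) ^ α ≤
        (1 + |Real.log c|) ^ α * (Real.log (Real.exp 1 + |f x|)) ^ α := by
      rw [← Real.mul_rpow (by positivity) (le_trans zero_le_one (aux_one_le_log (abs_nonneg _)))]
      exact Real.rpow_le_rpow (le_trans zero_le_one (hlog1 c hc x)) h1 (le_of_lt hα)
    calc G c x ≤ |f x| ^ p * ((1 + |Real.log c|) ^ α * (Real.log (Real.exp 1 + |f x|)) ^ α) :=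
          mul_le_mul_of_nonneg_left h2 (Real.rpow_nonneg (abs_nonneg _) p)
    _ = (1 + |Real.log c|) ^ α * (|f x| ^ p * (Real.log (Real.exp 1 + |f x|)) ^ α) := by ring
  -- integral facts
  have hNp0 : 0 ≤ Np := integral_nonneg fun x => Real.rpow_nonneg (abs_nonneg _) p
  have hNp_le : ∀ c : ℝ, 0 < c → Np ≤ I c := by
    intro c hc
    apply integral_mono_of_nonneg (ae_of_all _ fun x => Real.rpow_nonneg (abs_nonneg _) p)
      (hIntc c hc)
    filter_upwards with x
    exact le_mul_of_one_le_right (Real.rpow_nonneg (abs_nonneg _) p)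
      (Real.one_le_rpow (hlog1 c hc x) (le_of_lt hα))
  have hI_mono : ∀ c₁ c₂ : ℝ, 0 < c₁ → c₁ ≤ c₂ → I c₂ ≤ I c₁ := by
    intro c₁ c₂ hc₁ hcc
    have hc₂ : 0 < c₂ := lt_of_lt_of_le hc₁ hcc
    apply integral_mono_of_nonneg (ae_of_all _ (hGnn c₂ hc₂)) (hIntc c₁ hc₁)
    filter_upwards with x
    apply mul_le_mul_of_nonneg_left _ (Real.rpow_nonneg (abs_nonneg _) p)
    apply Real.rpow_le_rpow (le_trans zero_le_one (hlog1 c₂ hc₂ x)) _ (le_of_lt hα)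
    apply Real.log_le_log (by positivity)
    have : |f x| / c₂ ≤ |f x| / c₁ := by gcongr
    linarith
  -- identities for M and modularNorm
  have hM_eq : M = (V⁻¹ * Np) ^ (1/p) := by
    rw [hMdef, meanLpNorm, setAverage_eq, smul_eq_mul, measureReal_def, ← hVdef, hNpdef]
  have hMp : M ^ p = V⁻¹ * Np := by
    rw [hM_eq, one_div, Real.rpow_inv_rpow (by positivity) (ne_of_gt hp0)]
  have hMNp_pos : 0 < V⁻¹ * Np := by
    rw [← hMp]; exact Real.rpow_pos_of_pos hpos p
  have hm_eq : modularNorm Ω p α f = (V⁻¹ * I M) ^ (1/p) := by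
    rw [modularNorm, setAverage_eq, smul_eq_mul, measureReal_def, ← hVdef, hIdef]
  have hIM_pos : 0 < V⁻¹ * I M :=
    lt_of_lt_of_le hMNp_pos (mul_le_mul_of_nonneg_left (hNp_le M hpos) (le_of_lt hVinv))
  have hm_pos : 0 < modularNorm Ω p α f := by
    rw [hm_eq]; exact Real.rpow_pos_of_pos hIM_pos _
  have hm_p : (modularNorm Ω p α f) ^ p = V⁻¹ * I M := by
    rw [hm_eq, one_div, Real.rpow_inv_rpow (le_of_lt hIM_pos) (ne_of_gt hp0)]
  have hMm : M ≤ modularNorm Ω p α f := by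
    rw [hM_eq, hm_eq]
    exact Real.rpow_le_rpow (le_of_lt hMNp_pos)
      (mul_le_mul_of_nonneg_left (hNp_le M hpos) (le_of_lt hVinv)) (by positivity)
  -- the average in the luxNorm set
  have havg : ∀ σ : ℝ, 0 < σ →
      (⨍ x in Ω, (|f x| ^ p / σ ^ p) * (Real.log (Real.exp 1 + |f x| / σ)) ^ α)
        = (σ ^ p)⁻¹ * (V⁻¹ * I σ) := by
    intro σ hσ
    have heq : (fun x => (|f x| ^ p / σ ^ p) * (Real.log (Real.exp 1 + |f x| / σ)) ^ α)
        = fun x => (σ ^ p)⁻¹ * G σ x := by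
      funext x
      simp only [hGdef]
      rw [div_mul_eq_mul_div, div_eq_inv_mul]
    rw [heq, setAverage_eq, smul_eq_mul, MeasureTheory.integral_const_mul, measureReal_def, ← hVdef, hIdef]
    ring
  have hcond : ∀ σ : ℝ, 0 < σ →
      ((⨍ x in Ω, (|f x| ^ p / σ ^ p) * (Real.log (Real.exp 1 + |f x| / σ)) ^ α ≤ 1)
        ↔ V⁻¹ * I σ ≤ σ ^ p) := by
    intro σ hσ
    rw [havg σ hσ, inv_mul_le_iff₀ (Real.rpow_pos_of_pos hσ p), mul_one]
  -- membership of the modular norm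
  have hmem_m : modularNorm Ω p α f ∈ {σ : ℝ | 0 < σ ∧
      ⨍ x in Ω, (|f x| ^ p / σ ^ p) * (Real.log (Real.exp 1 + |f x| / σ)) ^ α ≤ 1} := by
    refine ⟨hm_pos, (hcond _ hm_pos).mpr ?_⟩
    rw [hm_p]
    exact mul_le_mul_of_nonneg_left (hI_mono M (modularNorm Ω p α f) hpos hMm) (le_of_lt hVinv)
  have hbdd : BddBelow {σ : ℝ | 0 < σ ∧
      ⨍ x in Ω, (|f x| ^ p / σ ^ p) * (Real.log (Real.exp 1 + |f x| / σ)) ^ α ≤ 1} :=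
    ⟨0, fun σ hσ => le_of_lt hσ.1⟩
  constructor
  · -- first inequality
    exact csInf_le hbdd hmem_m
  · -- second inequality
    set C : ℝ := 2 ^ α + (2 * α / (Real.exp 1 * p)) ^ α with hC
    have hC1 : 1 ≤ C := by
      have h1 : (1:ℝ) ≤ 2 ^ α := Real.one_le_rpow one_le_two (le_of_lt hα)
      have h2 : (0:ℝ) ≤ (2 * α / (Real.exp 1 * p)) ^ α := Real.rpow_nonneg (by positivity) α
      rw [hC]; linarith
    have hC0 : 0 < C := lt_of_lt_of_le one_pos hC1
    -- key: the modular norm is ≤ C * σ for every admissible σ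
    have key : ∀ σ : ℝ, σ ∈ {σ : ℝ | 0 < σ ∧
        ⨍ x in Ω, (|f x| ^ p / σ ^ p) * (Real.log (Real.exp 1 + |f x| / σ)) ^ α ≤ 1} →
        modularNorm Ω p α f ≤ C * σ := by
      rintro σ ⟨hσ, hσc⟩
      have hσI : V⁻¹ * I σ ≤ σ ^ p := (hcond σ hσ).mp hσc
      have hMσp : M ^ p ≤ σ ^ p := by
        rw [hMp]
        exact le_trans (mul_le_mul_of_nonneg_left (hNp_le σ hσ) (le_of_lt hVinv)) hσI
      have hMσ : M ≤ σ := by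
        have h1 : (M ^ p) ^ (1/p) ≤ (σ ^ p) ^ (1/p) :=
          Real.rpow_le_rpow (Real.rpow_nonneg (le_of_lt hpos) p) hMσp (by positivity)
        rwa [one_div, Real.rpow_rpow_inv (le_of_lt hpos) (ne_of_gt hp0),
          Real.rpow_rpow_inv (le_of_lt hσ) (ne_of_gt hp0)] at h1
      set a : ℝ := Real.log (σ / M) with ha
      have ha0 : 0 ≤ a := Real.log_nonneg ((one_le_div hpos).mpr hMσ)
      -- pointwise bound
      have hpt : ∀ x, G M x ≤ 2 ^ α * a ^ α * |f x| ^ p + 2 ^ α * G σ x := by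
        intro x
        have hb1 : 1 ≤ Real.log (Real.exp 1 + |f x| / σ) := hlog1 σ hσ x
        have hb0 : 0 ≤ Real.log (Real.exp 1 + |f x| / σ) := le_trans zero_le_one hb1
        have hlog : Real.log (Real.exp 1 + |f x| / M) ≤
            a + Real.log (Real.exp 1 + |f x| / σ) := aux_log_shift hpos hMσ (abs_nonneg _)
        have h2 : (Real.log (Real.exp 1 + |f x| / M)) ^ α ≤
            2 ^ α * (a ^ α + (Real.log (Real.exp 1 + |f x| / σ)) ^ α) := by
          calc (Real.log (Real.exp 1 + |f x| / M)) ^ α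
              ≤ (a + Real.log (Real.exp 1 + |f x| / σ)) ^ α :=
                Real.rpow_le_rpow (le_trans zero_le_one (hlog1 M hpos x)) hlog (le_of_lt hα)
          _ ≤ 2 ^ α * (a ^ α + (Real.log (Real.exp 1 + |f x| / σ)) ^ α) :=
                aux_two_rpow ha0 hb0 (le_of_lt hα)
        calc G M x ≤ |f x| ^ p *
              (2 ^ α * (a ^ α + (Real.log (Real.exp 1 + |f x| / σ)) ^ α)) :=
              mul_le_mul_of_nonneg_left h2 (Real.rpow_nonneg (abs_nonneg _) p)
        _ = 2 ^ α * a ^ α * |f x| ^ p + 2 ^ α * G σ x := by simp only [hGdef]; ring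
      -- integrate
      have hint : I M ≤ 2 ^ α * a ^ α * Np + 2 ^ α * I σ := by
        have hi1 : Integrable (fun x => 2 ^ α * a ^ α * |f x| ^ p) (volume.restrict Ω) :=
          hInt1.const_mul _
        have hi2 : Integrable (fun x => 2 ^ α * G σ x) (volume.restrict Ω) :=
          (hIntc σ hσ).const_mul _
        calc I M ≤ ∫ x in Ω, (2 ^ α * a ^ α * |f x| ^ p + 2 ^ α * G σ x) := by
              apply integral_mono_of_nonneg (ae_of_all _ (hGnn M hpos)) (hi1.add hi2)
              exact ae_of_all _ hpt
        _ = 2 ^ α * a ^ α * Np + 2 ^ α * I σ := by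
              rw [integral_add hi1 hi2, MeasureTheory.integral_const_mul,
                MeasureTheory.integral_const_mul, hIdef, hNpdef]
      -- the key scalar bound
      have hcalc : a ^ α * M ^ p ≤ (α / (Real.exp 1 * p)) ^ α * σ ^ p := by
        have ht0 : 0 < M / σ := by positivity
        have ht1 : M / σ ≤ 1 := (div_le_one hσ).mpr hMσ
        have h5 := aux_calc hp0 hα ht0 ht1
        rw [inv_div] at h5
        have h6 : (M / σ) ^ p * σ ^ p = M ^ p := by
          rw [← Real.mul_rpow (le_of_lt ht0) (le_of_lt hσ), div_mul_cancel₀ _ (ne_of_gt hσ)]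
        calc a ^ α * M ^ p = ((M / σ) ^ p * (Real.log (σ / M)) ^ α) * σ ^ p := by
              rw [ha]; rw [← h6]; ring
        _ ≤ (α / (Real.exp 1 * p)) ^ α * σ ^ p :=
              mul_le_mul_of_nonneg_right h5 (Real.rpow_nonneg (le_of_lt hσ) p)
      -- assemble : m^p ≤ C * σ^p
      have hmain : (modularNorm Ω p α f) ^ p ≤ C * σ ^ p := by
        have h7 : V⁻¹ * I M ≤ 2 ^ α * a ^ α * (V⁻¹ * Np) + 2 ^ α * (V⁻¹ * I σ) := by
          have := mul_le_mul_of_nonneg_left hint (le_of_lt hVinv)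
          calc V⁻¹ * I M ≤ V⁻¹ * (2 ^ α * a ^ α * Np + 2 ^ α * I σ) := this
          _ = 2 ^ α * a ^ α * (V⁻¹ * Np) + 2 ^ α * (V⁻¹ * I σ) := by ring
        have h8 : 2 ^ α * a ^ α * (V⁻¹ * Np) ≤ 2 ^ α * ((α / (Real.exp 1 * p)) ^ α * σ ^ p) := by
          rw [← hMp]
          have h2a : (0:ℝ) ≤ 2 ^ α := Real.rpow_nonneg (by norm_num) α
          calc 2 ^ α * a ^ α * M ^ p = 2 ^ α * (a ^ α * M ^ p) := by ring
          _ ≤ 2 ^ α * ((α / (Real.exp 1 * p)) ^ α * σ ^ p) :=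
                mul_le_mul_of_nonneg_left hcalc h2a
        have h9 : 2 ^ α * (V⁻¹ * I σ) ≤ 2 ^ α * σ ^ p :=
          mul_le_mul_of_nonneg_left hσI (Real.rpow_nonneg (by norm_num) α)
        have h10 : 2 ^ α * (α / (Real.exp 1 * p)) ^ α = (2 * α / (Real.exp 1 * p)) ^ α := by
          rw [← Real.mul_rpow (by norm_num) (by positivity), mul_div_assoc]
        rw [hm_p, hC]
        calc V⁻¹ * I M ≤ 2 ^ α * ((α / (Real.exp 1 * p)) ^ α * σ ^ p) + 2 ^ α * σ ^ p := by
              linarith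
        _ = (2 ^ α + 2 ^ α * (α / (Real.exp 1 * p)) ^ α) * σ ^ p := by ring
        _ = (2 ^ α + (2 * α / (Real.exp 1 * p)) ^ α) * σ ^ p := by rw [h10]
      have hCp : C * σ ^ p ≤ (C * σ) ^ p := by
        rw [Real.mul_rpow (le_of_lt hC0) (le_of_lt hσ)]
        apply mul_le_mul_of_nonneg_right _ (Real.rpow_nonneg (le_of_lt hσ) p)
        calc C = C ^ (1:ℝ) := (Real.rpow_one C).symm
        _ ≤ C ^ p := Real.rpow_le_rpow_of_exponent_le hC1 hp
      have h11 : (modularNorm Ω p α f) ^ p ≤ (C * σ) ^ p := le_trans hmain hCp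
      have h12 : ((modularNorm Ω p α f) ^ p) ^ (1/p) ≤ ((C * σ) ^ p) ^ (1/p) :=
        Real.rpow_le_rpow (Real.rpow_nonneg (le_of_lt hm_pos) p) h11 (by positivity)
      rwa [one_div, Real.rpow_rpow_inv (le_of_lt hm_pos) (ne_of_gt hp0),
        Real.rpow_rpow_inv (by positivity) (ne_of_gt hp0)] at h12
    -- conclude
    have hlow : modularNorm Ω p α f / C ≤ luxNorm Ω p α f := by
      apply le_csInf ⟨modularNorm Ω p α f, hmem_m⟩
      intro σ hσS
      rw [div_le_iff₀ hC0]
      calc modularNorm Ω p α f ≤ C * σ := key σ hσS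
      _ = σ * C := mul_comm _ _
    calc modularNorm Ω p α f = (modularNorm Ω p α f / C) * C := by field_simp
    _ ≤ luxNorm Ω p α f * C := mul_le_mul_of_nonneg_right hlow (le_of_lt hC0)
    _ = C * luxNorm Ω p α f := mul_comm _ _
end

section
/- Let Ω ⊂ ℝⁿ be a bounded measurable set with positive measure and p > 1. For every f ∈ 𝕃^{p log}(Ω) with ‖f‖_p > 0 one has ‖f‖_{𝕃^{p log}(Ω)} ≤ [f]_{𝕃^{p log}(Ω)} ≤ 4·‖f‖_{𝕃^{p log}(Ω)}. -/
open Real MeasureTheory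

variable {n : ℕ}

/-- The Luxemburg norm of the space `𝕃^{p log}(Ω)` (mean-integral form). -/
noncomputable def luxNormPlog (Ω : Set (EuclideanSpace ℝ (Fin n))) (p : ℝ)
    (f : EuclideanSpace ℝ (Fin n) → ℝ) : ℝ :=
  sInf {σ : ℝ | 0 < σ ∧
    ⨍ x in Ω, (|f x| ^ p / σ ^ p) +
      (|f x| ^ p / σ ^ p) * Real.log (Real.exp 1 + |f x| / σ) ≤ 1}

/-- The modular `[f]_{𝕃^{p log}(Ω)}`. -/
noncomputable def modularPlog (Ω : Set (EuclideanSpace ℝ (Fin n))) (p : ℝ)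
    (f : EuclideanSpace ℝ (Fin n) → ℝ) : ℝ :=
  (⨍ x in Ω, |f x| ^ p +
    |f x| ^ p * Real.log (Real.exp 1 + |f x| / meanLpNorm Ω p f)) ^ (1 / p)

lemma meas_aux₁ {α : Type*} [MeasurableSpace α] (f : α → ℝ) (hf : Measurable f)
    (p : ℝ) : Measurable fun x => |f x| ^ p := by
  measurability

lemma meas_aux₂ {α : Type*} [MeasurableSpace α] (f : α → ℝ) (hf : Measurable f)
    (p c : ℝ) :
    Measurable fun x => |f x| ^ p * Real.log (Real.exp 1 + |f x| / c) := by
  measurability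

set_option maxHeartbeats 1000000 in
theorem luxNormPlog_le_modularPlog_le (Ω : Set (EuclideanSpace ℝ (Fin n)))
    (hΩm : MeasurableSet Ω) (hΩfin : volume Ω < ⊤) (hΩpos : 0 < volume Ω)
    (p : ℝ) (hp : 1 < p)
    (f : EuclideanSpace ℝ (Fin n) → ℝ) (hf : Measurable f)
    (hmem : Integrable
      (fun x => |f x| ^ p + |f x| ^ p * Real.log (Real.exp 1 + |f x|))
      (volume.restrict Ω))
    (hpos : 0 < meanLpNorm Ω p f) :
    luxNormPlog Ω p f ≤ modularPlog Ω p f ∧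
      modularPlog Ω p f ≤ 4 * luxNormPlog Ω p f := by
  have hp0 : (0:ℝ) < p := by linarith
  set V := (volume Ω).toReal with hVdef
  have hV0 : 0 < V := ENNReal.toReal_pos hΩpos.ne' hΩfin.ne
  set g : EuclideanSpace ℝ (Fin n) → ℝ := fun x => |f x| ^ p with hgdef
  have hg0 : ∀ x, 0 ≤ g x := fun x => Real.rpow_nonneg (abs_nonneg _) p
  have hlog1 : ∀ t : ℝ, 0 ≤ t → 1 ≤ Real.log (Real.exp 1 + t) := by
    intro t ht
    have := Real.log_le_log (Real.exp_pos 1)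
      (show Real.exp 1 ≤ Real.exp 1 + t by linarith)
    simpa [Real.log_exp] using this
  -- integrability of g
  have hgint : Integrable g (volume.restrict Ω) := by
    refine hmem.mono' ?_ (Filter.Eventually.of_forall fun x => ?_)
    · exact (meas_aux₁ f hf p).aestronglyMeasurable
    · have h1 := hlog1 (|f x|) (abs_nonneg _)
      have h2 := hg0 x
      rw [Real.norm_eq_abs, abs_of_nonneg h2]
      nlinarith
  -- integrability of g * log (e + |f|/c)
  have hglogint : ∀ c : ℝ, 0 < c →
      Integrable (fun x => g x * Real.log (Real.exp 1 + |f x| / c))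
        (volume.restrict Ω) := by
    intro c hc
    set K : ℝ := max 1 c⁻¹ with hKdef
    have hK1 : (1:ℝ) ≤ K := le_max_left _ _
    have hKc : c⁻¹ ≤ K := le_max_right _ _
    have hKpos : (0:ℝ) < K := lt_of_lt_of_le one_pos hK1
    have hbig : Integrable
        (fun x => g x * Real.log K + (g x + g x * Real.log (Real.exp 1 + |f x|)))
        (volume.restrict Ω) := (hgint.mul_const _).add hmem
    refine hbig.mono' ?_ (Filter.Eventually.of_forall fun x => ?_)
    · exact (meas_aux₂ f hf p c).aestronglyMeasurable
    · have harg : Real.exp 1 + |f x| / c ≤ K * (Real.exp 1 + |f x|) := by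
        have h1 : |f x| / c = c⁻¹ * |f x| := by rw [div_eq_mul_inv, mul_comm]
        nlinarith [abs_nonneg (f x), Real.exp_pos 1]
      have hlogle : Real.log (Real.exp 1 + |f x| / c)
          ≤ Real.log K + Real.log (Real.exp 1 + |f x|) := by
        calc Real.log (Real.exp 1 + |f x| / c)
            ≤ Real.log (K * (Real.exp 1 + |f x|)) :=
              Real.log_le_log (by positivity) harg
          _ = Real.log K + Real.log (Real.exp 1 + |f x|) :=
              Real.log_mul hKpos.ne' (by positivity)
      have hnn : 0 ≤ Real.log (Real.exp 1 + |f x| / c) :=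
        le_trans one_pos.le (hlog1 _ (by positivity))
      rw [Real.norm_eq_abs, abs_of_nonneg (mul_nonneg (hg0 x) hnn)]
      nlinarith [hg0 x]
  set I0 : ℝ := ∫ x in Ω, g x with hI0def
  have hI0nn : 0 ≤ I0 := integral_nonneg hg0
  set If : ℝ → ℝ := fun c => ∫ x in Ω, g x * Real.log (Real.exp 1 + |f x| / c)
    with hIfdef
  -- If ≥ I0
  have hIf_ge : ∀ c : ℝ, 0 < c → I0 ≤ If c := by
    intro c hc
    refine integral_mono hgint (hglogint c hc) fun x => ?_
    exact le_mul_of_one_le_right (hg0 x) (hlog1 _ (by positivity))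
  -- If antitone
  have hIf_mono : ∀ c d : ℝ, 0 < c → c ≤ d → If d ≤ If c := by
    intro c d hc hcd
    refine integral_mono (hglogint d (lt_of_lt_of_le hc hcd)) (hglogint c hc)
      fun x => ?_
    have hd : 0 < d := lt_of_lt_of_le hc hcd
    refine mul_le_mul_of_nonneg_left ?_ (hg0 x)
    refine Real.log_le_log (by positivity) ?_
    gcongr
  -- the average rewrite
  have havg : ∀ c : ℝ, 0 < c →
      (⨍ x in Ω, (|f x| ^ p / c ^ p) +
        (|f x| ^ p / c ^ p) * Real.log (Real.exp 1 + |f x| / c))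
      = V⁻¹ * ((c ^ p)⁻¹ * (I0 + If c)) := by
    intro c hc
    rw [setAverage_eq]
    have hfun : (fun x => (|f x| ^ p / c ^ p) +
        (|f x| ^ p / c ^ p) * Real.log (Real.exp 1 + |f x| / c))
        = fun x => (c ^ p)⁻¹ * (g x + g x * Real.log (Real.exp 1 + |f x| / c)) := by
      funext x; simp only [hgdef]; ring
    rw [hfun, integral_const_mul, integral_add hgint (hglogint c hc), smul_eq_mul,
      measureReal_def, hVdef, hI0def, hIfdef]
  -- mean Lp norm
  have hNdef : meanLpNorm Ω p f = (V⁻¹ * I0) ^ (1/p) := by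
    rw [meanLpNorm, setAverage_eq, smul_eq_mul, measureReal_def, hVdef, hI0def]
  set N : ℝ := meanLpNorm Ω p f with hNset
  have hN0 : 0 < N := hpos
  have hVI0pos : 0 < V⁻¹ * I0 := by
    rcases lt_or_eq_of_le (mul_nonneg (inv_pos.mpr hV0).le hI0nn) with h | h
    · exact h
    · exfalso
      rw [hNdef, ← h, one_div, Real.zero_rpow (inv_ne_zero hp0.ne')] at hN0
      exact lt_irrefl 0 hN0
  have hI0pos : 0 < I0 := by
    have hVinv : 0 < V⁻¹ := inv_pos.mpr hV0
    nlinarith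
  have hNp : N ^ p = V⁻¹ * I0 := by
    rw [hNdef, one_div, Real.rpow_inv_rpow hVI0pos.le hp0.ne']
  -- helper : a^p ≤ b^p → a ≤ b
  have rpow_back : ∀ a b : ℝ, 0 ≤ a → 0 ≤ b → a ^ p ≤ b ^ p → a ≤ b := by
    intro a b ha hb h
    have h2 := Real.rpow_le_rpow (Real.rpow_nonneg ha p) h
      (inv_pos.mpr hp0).le
    rwa [Real.rpow_rpow_inv ha hp0.ne', Real.rpow_rpow_inv hb hp0.ne'] at h2
  -- the modular
  have hX0 : 0 < V⁻¹ * (I0 + If N) := by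
    have := hIf_ge N hN0
    have hVinv : 0 < V⁻¹ := inv_pos.mpr hV0
    nlinarith
  have hMdef : modularPlog Ω p f = (V⁻¹ * (I0 + If N)) ^ (1/p) := by
    rw [modularPlog, setAverage_eq, integral_add hgint (hglogint N hN0),
      smul_eq_mul, measureReal_def, hVdef, hI0def, hIfdef, hNset]
  set M : ℝ := modularPlog Ω p f with hMset
  have hMp : M ^ p = V⁻¹ * (I0 + If N) := by
    rw [hMdef, one_div, Real.rpow_inv_rpow hX0.le hp0.ne']
  have hM0 : 0 < M := by
    rw [hMdef]; exact Real.rpow_pos_of_pos hX0 _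
  have hNM : N ≤ M := by
    refine rpow_back N M hN0.le hM0.le ?_
    rw [hNp, hMp]
    have := hIf_ge N hN0
    have hVinv : 0 < V⁻¹ := inv_pos.mpr hV0
    nlinarith
  -- set S
  set S : Set ℝ := {σ : ℝ | 0 < σ ∧
    ⨍ x in Ω, (|f x| ^ p / σ ^ p) +
      (|f x| ^ p / σ ^ p) * Real.log (Real.exp 1 + |f x| / σ) ≤ 1} with hSdef
  have hSmem : ∀ σ : ℝ, 0 < σ → (σ ∈ S ↔ I0 + If σ ≤ V * σ ^ p) := by
    intro σ hσ
    have hσp : 0 < σ ^ p := Real.rpow_pos_of_pos hσ p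
    rw [hSdef, Set.mem_setOf_eq, havg σ hσ]
    have heq : V⁻¹ * ((σ ^ p)⁻¹ * (I0 + If σ)) = (I0 + If σ) / (V * σ ^ p) := by
      field_simp
    rw [heq, div_le_one (by positivity)]
    exact ⟨fun h => h.2, fun h => ⟨hσ, h⟩⟩
  have hSbdd : BddBelow S := ⟨0, fun σ hσ => hσ.1.le⟩
  -- M ∈ S
  have hMS : M ∈ S := by
    rw [hSmem M hM0]
    have h1 : If M ≤ If N := hIf_mono N M hN0 hNM
    have h2 : V * M ^ p = I0 + If N := by
      rw [hMp]; field_simp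
    linarith
  have hlux : luxNormPlog Ω p f = sInf S := by rw [luxNormPlog, hSdef]
  constructor
  · rw [hlux]
    exact csInf_le hSbdd hMS
  · -- M ≤ 4 σ for all σ ∈ S
    have key : ∀ σ ∈ S, M ≤ 4 * σ := by
      intro σ hσS
      have hσ : 0 < σ := hσS.1
      have h1 : I0 + If σ ≤ V * σ ^ p := (hSmem σ hσ).mp hσS
      have hσp : 0 < σ ^ p := Real.rpow_pos_of_pos hσ p
      have hIfσ : I0 ≤ If σ := hIf_ge σ hσ
      have hI0le : I0 ≤ V * σ ^ p := by linarith
      have hNσ : N ≤ σ := by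
        refine rpow_back N σ hN0.le hσ.le ?_
        rw [hNp]
        have hVV : V⁻¹ * V = 1 := inv_mul_cancel₀ hV0.ne'
        have hVinv : 0 < V⁻¹ := inv_pos.mpr hV0
        nlinarith
      set t : ℝ := σ / N with htdef
      have ht1 : 1 ≤ t := (one_le_div hN0).mpr hNσ
      have ht0 : 0 < t := lt_of_lt_of_le one_pos ht1
      -- pointwise log inequality
      have hptw : ∀ x, g x * Real.log (Real.exp 1 + |f x| / N)
          ≤ Real.log t * g x + g x * Real.log (Real.exp 1 + |f x| / σ) := by
        intro x
        have harg : Real.exp 1 + |f x| / N ≤ t * (Real.exp 1 + |f x| / σ) := by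
          have h3 : t * (|f x| / σ) = |f x| / N := by
            rw [htdef]; field_simp
          nlinarith [Real.exp_pos 1, abs_nonneg (f x), div_nonneg (abs_nonneg (f x)) hσ.le]
        have hlog : Real.log (Real.exp 1 + |f x| / N)
            ≤ Real.log t + Real.log (Real.exp 1 + |f x| / σ) := by
          calc Real.log (Real.exp 1 + |f x| / N)
              ≤ Real.log (t * (Real.exp 1 + |f x| / σ)) :=
                Real.log_le_log (by positivity) harg
            _ = Real.log t + Real.log (Real.exp 1 + |f x| / σ) :=
                Real.log_mul ht0.ne' (by positivity)
        nlinarith [hg0 x]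
      have hIN : If N ≤ Real.log t * I0 + If σ := by
        have h4 := integral_mono (hglogint N hN0)
          ((hgint.const_mul (Real.log t)).add (hglogint σ hσ)) hptw
        simp only [Pi.add_apply] at h4
        rwa [integral_add (hgint.const_mul _) (hglogint σ hσ),
          integral_const_mul] at h4
      have hlogt : Real.log t ≤ t ^ p := by
        have h5 : Real.log t ≤ t - 1 := Real.log_le_sub_one_of_pos ht0
        have h6 : t ^ (1:ℝ) ≤ t ^ p := Real.rpow_le_rpow_of_exponent_le ht1 hp.le
        rw [Real.rpow_one] at h6
        linarith
      have hI0eq : I0 = V * N ^ p := by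
        rw [hNp]; field_simp
      have htp : t ^ p= σ ^ p / N ^ p := by
        rw [htdef, Real.div_rpow hσ.le hN0.le]
      have hNppos : 0 < N ^ p := Real.rpow_pos_of_pos hN0 p
      have hlogtI0 : Real.log t * I0 ≤ V * σ ^ p := by
        have h7 : Real.log t * I0 ≤ t ^ p * I0 :=
          mul_le_mul_of_nonneg_right hlogt hI0nn
        have h8 : t ^ p * I0 = V * σ ^ p := by
          rw [htp, hI0eq]; field_simp
        linarith
      have hMp4 : M ^ p ≤ (4 * σ) ^ p := by
        have h9 : If σ ≤ V * σ ^ p := by linarith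
        have h10 : I0 + If N ≤ 3 * (V * σ ^ p) := by linarith
        have h11 : M ^ p ≤ 3 * σ ^ p := by
          rw [hMp]
          have hVinv : 0 < V⁻¹ := inv_pos.mpr hV0
          have hVV : V⁻¹ * V = 1 := inv_mul_cancel₀ hV0.ne'
          nlinarith
        have h12 : (4:ℝ) ≤ 4 ^ p := by
          have := Real.rpow_le_rpow_of_exponent_le (show (1:ℝ) ≤ 4 by norm_num) hp.le
          rwa [Real.rpow_one] at this
        have h13 : (4 * σ) ^ p = 4 ^ p * σ ^ p :=
          Real.mul_rpow (by norm_num) hσ.le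
        nlinarith
      exact rpow_back M (4 * σ) hM0.le (by linarith) hMp4
    rw [hlux]
    have hle : M / 4 ≤ sInf S := le_csInf ⟨M, hMS⟩ (fun σ hσ => by
      have := key σ hσ; linarith)
    linarith
end

section
/- Let 1 < p < 2 and n ≥ 1. For every ε > 0 there exists C_ε = C(p, ε) > 0 such that for all ξ₁, ξ₂ ∈ ℝⁿ, not both zero: |ξ₁ − ξ₂|^p · log(e + |ξ₁ − ξ₂|) ≤ ε·(|ξ₁| + |ξ₂|)^p · log(e + |ξ₁| + |ξ₂|) + C_ε · |ξ₁ − ξ₂|² · (|ξ₁|² + |ξ₂|²)^{(p−2)/2} · log(e + |ξ₁| + |ξ₂|). -/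
open Real

lemma key_ineq (p : ℝ) (hp1 : 1 < p) (hp2 : p < 2) (ε : ℝ) (hε : 0 < ε) :
    ∃ C : ℝ, 0 < C ∧ ∀ a Q : ℝ, 0 ≤ a → 0 < Q →
      a ^ p ≤ ε * Q ^ (p / 2) + C * (a ^ (2:ℝ) * Q ^ ((p - 2) / 2)) := by
  set r : ℝ := 2 / (2 - p) with hr
  set q : ℝ := 2 / p with hq
  have hp0 : 0 < p := by linarith
  have h2p : 0 < 2 - p := by linarith
  have hr1 : 1 < r := by rw [hr, lt_div_iff₀ h2p]; linarith
  have hq1 : 1 < q := by rw [hq, lt_div_iff₀ hp0]; linarith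
  have hrq : r.HolderConjugate q := by
    rw [Real.holderConjugate_iff]
    constructor
    · exact hr1
    · rw [hr, hq]
      field_simp
      ring
  set t : ℝ := ε ^ (1 / r) with ht
  have htpos : 0 < t := rpow_pos_of_pos hε _
  have hrpos : 0 < r := by linarith
  have hqpos : 0 < q := by linarith
  have hrne : r ≠ 0 := ne_of_gt hrpos
  have htr : t ^ r = ε := by
    rw [ht, ← rpow_mul hε.le, one_div_mul_cancel hrne, rpow_one]
  refine ⟨t ^ (-q), rpow_pos_of_pos htpos _, fun a Q ha hQ => ?_⟩
  set X : ℝ := Q ^ (p * (2 - p) / 4) with hX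
  set Y : ℝ := Q ^ ((p - 2) * p / 4) * a ^ p with hY
  have hXpos : 0 < X := rpow_pos_of_pos hQ _
  have hYnn : 0 ≤ Y := mul_nonneg (rpow_pos_of_pos hQ _).le (rpow_nonneg ha _)
  have hXY : X * Y = a ^ p := by
    rw [hX, hY, ← mul_assoc, ← rpow_add hQ]
    have : p * (2 - p) / 4 + (p - 2) * p / 4 = 0 := by ring
    rw [this, rpow_zero, one_mul]
  have hXr : X ^ r = Q ^ (p / 2) := by
    rw [hX, ← rpow_mul hQ.le]
    congr 1
    rw [hr]; field_simp; ring
  have hYq : Y ^ q = Q ^ ((p - 2) / 2) * a ^ (2:ℝ) := by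
    rw [hY, mul_rpow (rpow_pos_of_pos hQ _).le (rpow_nonneg ha _),
      ← rpow_mul hQ.le, ← rpow_mul ha]
    have h1 : (p - 2) * p / 4 * q = (p - 2) / 2 := by rw [hq]; field_simp; ring
    have h2 : p * q = 2 := by rw [hq]; field_simp
    rw [h1, h2]
  have hyoung := Real.young_inequality_of_nonneg
    (mul_nonneg htpos.le hXpos.le) (mul_nonneg (inv_nonneg.mpr htpos.le) hYnn) hrq
  have heq : (t * X) * (t⁻¹ * Y) = a ^ p := by
    field_simp
    exact hXY
  rw [heq] at hyoung
  have htXr : (t * X) ^ r = ε * X ^ r := by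
    rw [mul_rpow htpos.le hXpos.le, htr]
  have htYq : (t⁻¹ * Y) ^ q = t ^ (-q) * Y ^ q := by
    rw [mul_rpow (inv_nonneg.mpr htpos.le) hYnn, ← Real.rpow_neg_one t,
      ← rpow_mul htpos.le]
    norm_num
  have hb1 : (t * X) ^ r / r ≤ ε * X ^ r := by
    rw [htXr, div_le_iff₀ hrpos]
    have h0 : 0 ≤ ε * X ^ r := mul_nonneg hε.le (rpow_nonneg hXpos.le _)
    nlinarith
  have hb2 : (t⁻¹ * Y) ^ q / q ≤ t ^ (-q) * Y ^ q := by
    rw [htYq, div_le_iff₀ hqpos]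
    have h0 : 0 ≤ t ^ (-q) * Y ^ q := mul_nonneg (rpow_pos_of_pos htpos _).le (rpow_nonneg hYnn _)
    nlinarith
  calc a ^ p ≤ (t * X) ^ r / r + (t⁻¹ * Y) ^ q / q := hyoung
    _ ≤ ε * X ^ r + t ^ (-q) * Y ^ q := add_le_add hb1 hb2
    _ = ε * Q ^ (p / 2) + t ^ (-q) * (a ^ (2:ℝ) * Q ^ ((p - 2) / 2)) := by
        rw [hXr, hYq]; ring

theorem log_growth_comparison_p_lt_two (n : ℕ) (hn : 1 ≤ n) (p : ℝ)
    (hp1 : 1 < p) (hp2 : p < 2) :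
    ∀ ε : ℝ, 0 < ε → ∃ C : ℝ, 0 < C ∧
      ∀ ξ₁ ξ₂ : EuclideanSpace ℝ (Fin n), ¬(ξ₁ = 0 ∧ ξ₂ = 0) →
        ‖ξ₁ - ξ₂‖ ^ p * Real.log (Real.exp 1 + ‖ξ₁ - ξ₂‖) ≤
          ε * (‖ξ₁‖ + ‖ξ₂‖) ^ p * Real.log (Real.exp 1 + ‖ξ₁‖ + ‖ξ₂‖) +
          C * ‖ξ₁ - ξ₂‖ ^ (2 : ℝ) * (‖ξ₁‖ ^ (2 : ℝ) + ‖ξ₂‖ ^ (2 : ℝ)) ^ ((p - 2) / 2) *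
            Real.log (Real.exp 1 + ‖ξ₁‖ + ‖ξ₂‖) := by
  intro ε hε
  obtain ⟨C, hC, hkey⟩ := key_ineq p hp1 hp2 ε hε
  refine ⟨C, hC, fun ξ₁ ξ₂ hne => ?_⟩
  set x : ℝ := ‖ξ₁‖ with hxd
  set y : ℝ := ‖ξ₂‖ with hyd
  set a : ℝ := ‖ξ₁ - ξ₂‖ with had
  have hx : 0 ≤ x := norm_nonneg _
  have hy : 0 ≤ y := norm_nonneg _
  have ha : 0 ≤ a := norm_nonneg _
  have hsq : ∀ z : ℝ, 0 ≤ z → z ^ (2:ℝ) = z * z := fun z hz => by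
    rw [show (2:ℝ) = ((2:ℕ):ℝ) by norm_num, rpow_natCast]; ring
  have hs : 0 < x + y := by
    rcases not_and_or.mp hne with h | h
    · have : 0 < x := norm_pos_iff.mpr h
      linarith
    · have : 0 < y := norm_pos_iff.mpr h
      linarith
  have hQ : 0 < x ^ (2:ℝ) + y ^ (2:ℝ) := by
    rw [hsq x hx, hsq y hy]
    rcases not_and_or.mp hne with h | h
    · have hx' : 0 < x := norm_pos_iff.mpr h
      nlinarith
    · have hy' : 0 < y := norm_pos_iff.mpr h
      nlinarith
  have has : a ≤ x + y := norm_sub_le _ _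
  set Q : ℝ := x ^ (2:ℝ) + y ^ (2:ℝ) with hQd
  set L : ℝ := Real.log (Real.exp 1 + x + y) with hLd
  have hL1 : 1 ≤ L := by
    rw [hLd]
    have h1 := Real.log_le_log (exp_pos 1) (by linarith : Real.exp 1 ≤ Real.exp 1 + x + y)
    rwa [Real.log_exp] at h1
  have hLa : Real.log (Real.exp 1 + a) ≤ L := by
    rw [hLd]
    exact Real.log_le_log (by positivity) (by linarith)
  have hQle : Q ≤ (x + y) ^ (2:ℝ) := by
    rw [hQd, hsq x hx, hsq y hy, hsq (x+y) hs.le]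
    nlinarith
  have hQp : Q ^ (p / 2) ≤ (x + y) ^ p := by
    have h1 := rpow_le_rpow hQ.le hQle (by positivity : (0:ℝ) ≤ p / 2)
    rwa [← rpow_mul hs.le, show 2 * (p / 2) = p by ring] at h1
  calc a ^ p * Real.log (Real.exp 1 + a)
      ≤ a ^ p * L := mul_le_mul_of_nonneg_left hLa (rpow_nonneg ha p)
    _ ≤ (ε * (x + y) ^ p + C * (a ^ (2:ℝ) * Q ^ ((p - 2) / 2))) * L := by
        apply mul_le_mul_of_nonneg_right _ (by linarith : (0:ℝ) ≤ L)
        calc a ^ p ≤ ε * Q ^ (p / 2) + C * (a ^ (2:ℝ) * Q ^ ((p - 2) / 2)) := hkey a Q ha hQ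
          _ ≤ _ := add_le_add (mul_le_mul_of_nonneg_left hQp hε.le) le_rfl
    _ = ε * (x + y) ^ p * L + C * a ^ (2:ℝ) * Q ^ ((p - 2) / 2) * L := by ring
end
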